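/- arXiv:2404.05271 — 7 statements merged into one kernel-verified Lean document; each statement's English description precedes it below -/
import Mathlib

section
/- Let K = 2^m for some natural number m. If S is a finite multiset of natural numbers, each of which is a power of 2 and at most K, and |S| ≥ K, then there exists a sub-multiset S' of S whose sum is exactly K. -/
lemma aux_pow2 (m : ℕ) : ∀ S : Multiset ℕ,
    (∀ x ∈ S, (∃ a : ℕ, x = 2 ^ a) ∧ x ≤ 2 ^ m) → 2 ^ m ≤ S.sum →
    ∃ S' : Multiset ℕ, S' ≤ S ∧ S'.sum = 2 ^ m := by
  induction m with
  | zero =>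
    intro S hpow hsum
    have hS : S ≠ 0 := by
      rintro rfl; simp at hsum
    obtain ⟨x, hx⟩ := Multiset.exists_mem_of_ne_zero hS
    obtain ⟨⟨a, rfl⟩, hle⟩ := hpow x hx
    have : 2 ^ a = 1 := le_antisymm hle (Nat.one_le_two_pow)
    exact ⟨{2 ^ a}, by simpa using Multiset.singleton_le.mpr hx, by simp [this]⟩
  | succ m ih =>
    intro S hpow hsum
    by_cases hbig : ∃ x ∈ S, x = 2 ^ (m + 1)
    · obtain ⟨x, hx, rfl⟩ := hbig
      exact ⟨{2 ^ (m + 1)}, Multiset.singleton_le.mpr hx, by simp⟩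
    · push_neg at hbig
      have hsmall : ∀ x ∈ S, (∃ a : ℕ, x = 2 ^ a) ∧ x ≤ 2 ^ m := by
        intro x hx
        obtain ⟨⟨a, rfl⟩, hle⟩ := hpow x hx
        refine ⟨⟨a, rfl⟩, ?_⟩
        have hne := hbig _ hx
        have : 2 ^ a < 2 ^ (m + 1) := lt_of_le_of_ne hle hne
        have ha : a < m + 1 := (Nat.pow_lt_pow_iff_right one_lt_two).mp this
        exact Nat.pow_le_pow_right (by norm_num) (Nat.lt_succ_iff.mp ha)
      have h1 : 2 ^ m ≤ S.sum := le_trans (Nat.pow_le_pow_right (by norm_num) (Nat.le_succ m)) hsum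
      obtain ⟨S1, hS1le, hS1sum⟩ := ih S hsmall h1
      have hsub : ∀ x ∈ S - S1, (∃ a : ℕ, x = 2 ^ a) ∧ x ≤ 2 ^ m := by
        intro x hx
        exact hsmall x (Multiset.mem_of_le (Multiset.sub_le_self S S1) hx)
      have hdecomp : S - S1 + S1 = S := tsub_add_cancel_of_le hS1le
      have hsum2 : 2 ^ m ≤ (S - S1).sum := by
        have : (S - S1).sum + S1.sum = S.sum := by
          rw [← Multiset.sum_add, hdecomp]
        have h2 : 2 ^ (m + 1) = 2 ^ m + 2 ^ m := by ring
        omega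
      obtain ⟨S2, hS2le, hS2sum⟩ := ih (S - S1) hsub hsum2
      refine ⟨S1 + S2, ?_, by rw [Multiset.sum_add, hS1sum, hS2sum]; ring⟩
      calc S1 + S2 ≤ S1 + (S - S1) := add_le_add_right hS2le S1
        _ = S := by rw [add_comm]; exact hdecomp

theorem stmt_0 (m K : ℕ) (hK : K = 2 ^ m) (S : Multiset ℕ)
    (hpow : ∀ x ∈ S, (∃ a : ℕ, x = 2 ^ a) ∧ x ≤ K)
    (hcard : K ≤ Multiset.card S) :
    ∃ S' : Multiset ℕ, S' ≤ S ∧ S'.sum = K := by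
  subst hK
  apply aux_pow2 m S hpow
  calc 2 ^ m ≤ Multiset.card S := hcard
    _ ≤ S.sum := by
      have : Multiset.card S • 1 ≤ S.sum := by
        apply Multiset.card_nsmul_le_sum
        intro x hx
        obtain ⟨⟨a, rfl⟩, _⟩ := hpow x hx
        exact Nat.one_le_two_pow
      simpa using this
end

section
/- Let K = 2^m and let S be a finite multiset of powers of 2, each at most K, such that no sub-multiset of S sums to exactly K. Then the total sum of S is at most K - 1, and in particular |S| ≤ K - 1. -/
lemma exists_max_multiset (S : Multiset ℕ) (h : S ≠ 0) :
    ∃ x ∈ S, ∀ y ∈ S, y ≤ x := by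
  induction S using Multiset.induction_on with
  | empty => exact absurd rfl h
  | cons a S ih =>
    rcases eq_or_ne S 0 with rfl | hS
    · exact ⟨a, by simp, by simp⟩
    · obtain ⟨x, hxS, hmax⟩ := ih hS
      refine ⟨max a x, ?_, ?_⟩
      · rcases le_total a x with h' | h'
        · simp [max_eq_right h', Multiset.mem_cons_of_mem hxS]
        · simp [max_eq_left h']
      · intro y hy
        rcases Multiset.mem_cons.mp hy with rfl | hy
        · exact le_max_left _ _
        · exact le_trans (hmax y hy) (le_max_right _ _)

lemma aux_subset_sum : ∀ (S : Multiset ℕ) (T : ℕ),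
    (∀ x ∈ S, (∃ a : ℕ, x = 2 ^ a) ∧ x ∣ T) → T ≤ S.sum →
    ∃ S' ≤ S, S'.sum = T := by
  intro S
  induction S using Multiset.strongInductionOn with
  | _ S ih =>
    intro T hx hT
    rcases Nat.eq_zero_or_pos T with rfl | hpos
    · exact ⟨0, Multiset.zero_le S, rfl⟩
    · have hS : S ≠ 0 := by
        rintro rfl; simp at hT; omega
      obtain ⟨x, hxS, hmax⟩ := exists_max_multiset S hS
      obtain ⟨⟨a, rfl⟩, hdvd⟩ := hx _ hxS
      have hxT : 2 ^ a ≤ T := Nat.le_of_dvd hpos hdvd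
      have hcons : (2 ^ a) ::ₘ S.erase (2 ^ a) = S := Multiset.cons_erase hxS
      have hlt : S.erase (2 ^ a) < S := Multiset.erase_lt.mpr hxS
      have hsum : S.sum = 2 ^ a + (S.erase (2 ^ a)).sum := by
        conv_lhs => rw [← hcons]
        simp
      obtain ⟨S'', hle, hsum''⟩ := ih (S.erase (2 ^ a)) hlt (T - 2 ^ a)
        (by
          intro y hy
          have hyS := Multiset.mem_of_mem_erase hy
          obtain ⟨⟨b, rfl⟩, hbd⟩ := hx _ hyS
          refine ⟨⟨b, rfl⟩, ?_⟩
          have hba : b ≤ a := by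
            have := hmax _ hyS
            exact (Nat.pow_le_pow_iff_right one_lt_two).mp this
          exact Nat.dvd_sub hbd (pow_dvd_pow 2 hba))
        (by omega)
      refine ⟨(2 ^ a) ::ₘ S'', ?_, ?_⟩
      · rw [← hcons]
        exact Multiset.cons_le_cons _ hle
      · simp [hsum'', Nat.add_sub_cancel' hxT]

lemma card_le_sum_multiset (S : Multiset ℕ) (h : ∀ x ∈ S, 1 ≤ x) :
    Multiset.card S ≤ S.sum := by
  induction S using Multiset.induction_on with
  | empty => simp
  | cons a S ih =>
    have h1 : 1 ≤ a := h a (Multiset.mem_cons_self _ _)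
    have h2 := ih (fun x hx => h x (Multiset.mem_cons_of_mem hx))
    simp only [Multiset.card_cons, Multiset.sum_cons]
    omega

theorem stmt_2 (m K : ℕ) (hK : K = 2 ^ m) (S : Multiset ℕ)
    (hpow : ∀ x ∈ S, (∃ a : ℕ, x = 2 ^ a) ∧ x ≤ K)
    (hno : ¬ ∃ S' : Multiset ℕ, S' ≤ S ∧ S'.sum = K) :
    S.sum ≤ K - 1 ∧ Multiset.card S ≤ K - 1 := by
  have hKpos : 1 ≤ K := by rw [hK]; exact Nat.one_le_two_pow
  have hsum : S.sum ≤ K - 1 := by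
    by_contra h
    have hKle : K ≤ S.sum := by omega
    apply hno
    refine aux_subset_sum S K ?_ hKle
    intro x hx
    obtain ⟨⟨a, rfl⟩, hle⟩ := hpow x hx
    refine ⟨⟨a, rfl⟩, ?_⟩
    rw [hK] at hle ⊢
    exact pow_dvd_pow 2 ((Nat.pow_le_pow_iff_right one_lt_two).mp hle)
  have hcard : Multiset.card S ≤ S.sum := by
    apply card_le_sum_multiset
    intro x hx
    obtain ⟨⟨a, rfl⟩, _⟩ := hpow x hx
    exact Nat.one_le_two_pow
  exact ⟨hsum, le_trans hcard hsum⟩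
end

section
/- Let 𝒜 be an algorithm for scheduling unit-size multi-server jobs on K servers, and OPT any feasible schedule of the same input. Suppose that for every slot t, either n(t) ≤ K − 1, or n(t) ≤ K − 1 + 2·n_OPT(t), where n(t) and n_OPT(t) are the numbers of remaining jobs with 𝒜 and OPT at slot t respectively. Suppose moreover that the number of slots in which 𝒜 has at least one remaining job is at most |𝒥|. Then F_𝒜 ≤ (K+1)·F_OPT. -/
theorem stmt_6 (K T N : ℕ) (hK : 1 ≤ K) (n nOPT : ℕ → ℕ)
    (hslot : ∀ t ∈ Finset.range T, n t ≤ K - 1 ∨ n t ≤ K - 1 + 2 * nOPT t)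
    (hbusy : ((Finset.range T).filter (fun t => 1 ≤ n t)).card ≤ N)
    (hN : N ≤ ∑ t ∈ Finset.range T, nOPT t) :
    ∑ t ∈ Finset.range T, n t ≤ (K + 1) * ∑ t ∈ Finset.range T, nOPT t := by
  set S := ∑ t ∈ Finset.range T, nOPT t with hS
  set B := (Finset.range T).filter (fun t => 1 ≤ n t) with hB
  have h1 : ∑ t ∈ Finset.range T, n t = ∑ t ∈ B, n t := by
    rw [hB, Finset.sum_filter_of_ne]
    intro t _ h
    omega
  have h2 : ∑ t ∈ B, n t ≤ ∑ t ∈ B, ((K - 1) + 2 * nOPT t) := by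
    apply Finset.sum_le_sum
    intro t ht
    have := hslot t (Finset.mem_filter.mp ht).1
    omega
  rw [Finset.sum_add_distrib, Finset.sum_const, smul_eq_mul, ← Finset.mul_sum] at h2
  have h3 : ∑ t ∈ B, nOPT t ≤ S :=
    Finset.sum_le_sum_of_subset (Finset.filter_subset _ _)
  have h4 : B.card ≤ S := le_trans hbusy hN
  have h5 : B.card * (K - 1) ≤ S * (K - 1) := Nat.mul_le_mul_right _ h4
  have h6 : S * (K - 1) + 2 * S = (K + 1) * S := by
    obtain ⟨k, rfl⟩ := Nat.exists_eq_add_of_le hK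
    have : 1 + k - 1 = k := by omega
    rw [this]; ring
  calc ∑ t ∈ Finset.range T, n t = ∑ t ∈ B, n t := h1
    _ ≤ B.card * (K - 1) + 2 * ∑ t ∈ B, nOPT t := h2
    _ ≤ S * (K - 1) + 2 * S := by
        have := Nat.mul_le_mul_left 2 h3
        omega
    _ = (K + 1) * S := h6
end

section
/- Consider unit-size jobs on 2K servers scheduled by an algorithm that, in every slot t where the total outstanding volume Σ_{j ∈ R(t)} s_j is at least K, processes a set of jobs with total server requirement at least K (s_j ∈ {1,…,K} arbitrary), and in every slot where the outstanding volume is less than K, processes all remaining jobs. Then for every slot t, the cumulative volume processed by this algorithm through slot t is at least the cumulative volume processed by any feasible algorithm using only K servers. -/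
/-- Outstanding volume at the start of slot `t`: all arrivals through slot `t`
(arrivals counted at start of slot) minus everything processed in slots before `t`. -/
def outstanding (arr p : ℕ → ℤ) (t : ℕ) : ℤ :=
  ∑ s ∈ Finset.range (t + 1), arr s - ∑ s ∈ Finset.range t, p s

theorem stmt_12 (K : ℤ) (arr pA pO : ℕ → ℤ)
    (harr : ∀ t, 0 ≤ arr t)
    (hpOpos : ∀ t, 0 ≤ pO t)
    (hpAfeas : ∀ t, pA t ≤ outstanding arr pA t)
    (hpOfeas : ∀ t, pO t ≤ outstanding arr pO t)
    (hpOcap : ∀ t, pO t ≤ K)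
    (hAfull : ∀ t, K ≤ outstanding arr pA t → K ≤ pA t)
    (hAall : ∀ t, outstanding arr pA t < K → pA t = outstanding arr pA t) :
    ∀ t : ℕ, ∑ s ∈ Finset.range (t + 1), pO s ≤ ∑ s ∈ Finset.range (t + 1), pA s := by
  intro t
  induction t with
  | zero =>
    by_cases h : K ≤ outstanding arr pA 0
    · have h1 := hAfull 0 h
      have h2 := hpOcap 0
      simp only [Finset.sum_range_succ, Finset.sum_range_zero]
      linarith
    · have h1 := hAall 0 (lt_of_not_ge h)
      have h2 := hpOfeas 0
      unfold outstanding at h1 h2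
      simp only [Finset.sum_range_succ, Finset.sum_range_zero] at h1 h2 ⊢
      linarith
  | succ n ih =>
    by_cases h : K ≤ outstanding arr pA (n + 1)
    · have h1 := hAfull _ h
      have h2 := hpOcap (n + 1)
      simp only [Finset.sum_range_succ] at ih ⊢
      linarith
    · have h1 := hAall _ (lt_of_not_ge h)
      have h2 := hpOfeas (n + 1)
      unfold outstanding at h1 h2
      simp only [Finset.sum_range_succ] at h1 h2 ih ⊢
      linarith
end

section
/- Consider the input where, for ℓ = 0,…,L₁−1, one job with s = K and two jobs with s = K/4 arrive at slot 2ℓ+1, and two jobs with s = K/4 arrive at slot 2ℓ+2; then, for n = 0,…,L₂−1, two jobs with s = K/2 arrive at slot 2L₁+n. All jobs have unit size. Then there exists a feasible schedule on K servers with total flow time at most 4L₁ + 2L₂. -/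
/-- Job set for the Greedy lower-bound input: for each `ℓ < L₁` there are five jobs
(one with need `K`, two with need `K/4` arriving at slot `2ℓ+1`, two with need `K/4`
arriving at slot `2ℓ+2`), and for each `n < L₂` two jobs with need `K/2`
arriving at slot `2L₁+n`. -/
def greedyJob (L₁ L₂ : ℕ) : Type := (Fin L₁ × Fin 5) ⊕ (Fin L₂ × Fin 2)

instance (L₁ L₂ : ℕ) : Fintype (greedyJob L₁ L₂) := by unfold greedyJob; infer_instance
instance (L₁ L₂ : ℕ) : DecidableEq (greedyJob L₁ L₂) := by unfold greedyJob; infer_instance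

/-- Arrival slot of each job. -/
def greedyArr (L₁ L₂ : ℕ) : greedyJob L₁ L₂ → ℕ :=
  Sum.elim (fun p => if (p.2 : ℕ) < 3 then 2 * (p.1 : ℕ) + 1 else 2 * (p.1 : ℕ) + 2)
    (fun q => 2 * L₁ + (q.1 : ℕ))

/-- Server need of each job. -/
def greedyNeed (K L₁ L₂ : ℕ) : greedyJob L₁ L₂ → ℕ :=
  Sum.elim (fun p => if (p.2 : ℕ) = 0 then K else K / 4) (fun _ => K / 2)

lemma sum_ite_le {α : Type*} (s : Finset α) (p : α → Prop) [DecidablePred p] (c : ℕ)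
    (h : ∀ a ∈ s, ∀ b ∈ s, p a → p b → a = b) :
    ∑ x ∈ s, (if p x then c else 0) ≤ c := by
  classical
  rw [← Finset.sum_filter, Finset.sum_const, smul_eq_mul]
  have hc : (s.filter p).card ≤ 1 := by
    apply Finset.card_le_one.mpr
    intro a ha b hb
    simp only [Finset.mem_filter] at ha hb
    exact h a ha.1 b hb.1 ha.2 hb.2
  calc (s.filter p).card * c ≤ 1 * c := Nat.mul_le_mul_right c hc
    _ = c := one_mul c

theorem stmt_14 (K L₁ L₂ : ℕ) (hK : 4 ∣ K) :
    ∃ d : greedyJob L₁ L₂ → ℕ,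
      (∀ j, greedyArr L₁ L₂ j ≤ d j) ∧
      (∀ t : ℕ, ∑ j ∈ Finset.univ.filter (fun j => d j = t), greedyNeed K L₁ L₂ j ≤ K) ∧
      ∑ j, (d j - greedyArr L₁ L₂ j) ≤ 4 * L₁ + 2 * L₂ := by
  obtain ⟨m, rfl⟩ := hK
  have h4 : 4 * m / 4 = m := by omega
  have h2 : 4 * m / 2 = 2 * m := by omega
  refine ⟨Sum.elim (fun p => if (p.2 : ℕ) = 0 then 2 * (p.1 : ℕ) + 1 else 2 * (p.1 : ℕ) + 2)
    (fun q => 2 * L₁ + (q.1 : ℕ) + 1), ?_, ?_, ?_⟩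
  · rintro (⟨ℓ, i⟩ | ⟨n, j⟩) <;> simp [greedyArr] <;> split_ifs <;> omega
  · intro t
    rw [Finset.sum_filter]
    unfold greedyJob
    rw [Fintype.sum_sum_type]
    simp only [Sum.elim_inl, Sum.elim_inr, greedyNeed, h4, h2]
    rw [Fintype.sum_prod_type, Fintype.sum_prod_type]
    have hl : (∑ x : Fin L₁, ∑ y : Fin 5,
          if (if ((x, y).2 : ℕ) = 0 then 2 * ((x, y).1 : ℕ) + 1 else 2 * ((x, y).1 : ℕ) + 2) = t
          then if ((x, y).2 : ℕ) = 0 then 4 * m else m else 0)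
        ≤ ∑ x : Fin L₁, (if 2 * (x : ℕ) + 1 = t ∨ 2 * (x : ℕ) + 2 = t then 4 * m else 0) := by
      apply Finset.sum_le_sum
      intro x _
      rw [Fin.sum_univ_five]
      simp only []
      norm_num
      split_ifs <;> omega
    rcases le_or_gt t (2 * L₁) with h | h
    · have hr : (∑ x : Fin L₂, ∑ y : Fin 2,
          if 2 * L₁ + ((x, y).1 : ℕ) + 1 = t then 2 * m else 0) = 0 := by
        apply Finset.sum_eq_zero
        intro n _
        apply Finset.sum_eq_zero
        intro j _
        rw [if_neg]
        omega
      rw [hr, Nat.add_zero]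
      refine le_trans hl (sum_ite_le _ _ _ ?_)
      intro a _ b _ ha hb
      apply Fin.ext
      omega
    · have hlz : (∑ x : Fin L₁, ∑ y : Fin 5,
          if (if ((x, y).2 : ℕ) = 0 then 2 * ((x, y).1 : ℕ) + 1 else 2 * ((x, y).1 : ℕ) + 2) = t
          then if ((x, y).2 : ℕ) = 0 then 4 * m else m else 0) = 0 := by
        apply Finset.sum_eq_zero
        intro x _
        apply Finset.sum_eq_zero
        intro y _
        have := x.isLt
        split_ifs <;> omega
      rw [hlz, Nat.zero_add]
      have hr : (∑ x : Fin L₂, ∑ y : Fin 2,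
          if 2 * L₁ + ((x, y).1 : ℕ) + 1 = t then 2 * m else 0)
          ≤ ∑ x : Fin L₂, (if 2 * L₁ + (x : ℕ) + 1 = t then 4 * m else 0) := by
        apply Finset.sum_le_sum
        intro x _
        rw [Fin.sum_univ_two]
        split_ifs <;> omega
      refine le_trans hr (sum_ite_le _ _ _ ?_)
      intro a _ b _ ha hb
      apply Fin.ext
      omega
  · unfold greedyJob
    rw [Fintype.sum_sum_type]
    simp only [Sum.elim_inl, Sum.elim_inr, greedyArr]
    rw [Fintype.sum_prod_type, Fintype.sum_prod_type]
    have hl : (∑ x : Fin L₁, ∑ y : Fin 5,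
        ((if ((x, y).2 : ℕ) = 0 then 2 * ((x, y).1 : ℕ) + 1 else 2 * ((x, y).1 : ℕ) + 2)
          - (if ((x, y).2 : ℕ) < 3 then 2 * ((x, y).1 : ℕ) + 1 else 2 * ((x, y).1 : ℕ) + 2)))
        = ∑ _x : Fin L₁, 2 := by
      apply Finset.sum_congr rfl
      intro x _
      rw [Fin.sum_univ_five]
      simp only [show ((0:Fin 5):ℕ) = 0 from rfl, show ((1:Fin 5):ℕ) = 1 from rfl,
        show ((2:Fin 5):ℕ) = 2 from rfl, show ((3:Fin 5):ℕ) = 3 from rfl,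
        show ((4:Fin 5):ℕ) = 4 from rfl]
      norm_num
      omega
    have hr : (∑ x : Fin L₂, ∑ y : Fin 2,
        (2 * L₁ + ((x, y).1 : ℕ) + 1 - (2 * L₁ + ((x, y).1 : ℕ)))) = ∑ _x : Fin L₂, 2 := by
      apply Finset.sum_congr rfl
      intro x _
      rw [Fin.sum_univ_two]
      omega
    rw [hl, hr, Finset.sum_const, Finset.sum_const]
    simp only [Finset.card_univ, Fintype.card_fin, smul_eq_mul]
    omega
end

section
/- Consider the input where K/2 unit-size jobs with s = 1 arrive at slot 1 and one unit-size job with s = K arrives at each slot 1,…,T. Any algorithm that in every slot 1,…,T processes the s=K job arriving in that slot has total flow time at least K·T/2, while there exists a feasible schedule with total flow time at most K/2 + 2T + 1. Hence for T ≥ K², the ratio of the two flow times is at least K/5. -/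
/-- Job set for the ServerFilling lower-bound input: `K/2` unit-need jobs arriving at
slot `1`, and `T` jobs with need `K`, the `t`-th arriving at slot `t+1` (slots `1,…,T`). -/
def sfJob (K T : ℕ) : Type := Fin (K / 2) ⊕ Fin T

instance (K T : ℕ) : Fintype (sfJob K T) := by unfold sfJob; infer_instance
instance (K T : ℕ) : DecidableEq (sfJob K T) := by unfold sfJob; infer_instance

/-- Arrival slot of each job. -/
def sfArr (K T : ℕ) : sfJob K T → ℕ :=
  Sum.elim (fun _ => 1) (fun t => (t : ℕ) + 1)

/-- Server need of each job. -/
def sfNeed (K T : ℕ) : sfJob K T → ℕ :=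
  Sum.elim (fun _ => 1) (fun _ => K)

lemma sfJob_sum (K T : ℕ) (f : sfJob K T → ℕ) :
    ∑ j, f j = (∑ i : Fin (K/2), f (Sum.inl i)) + ∑ t : Fin T, f (Sum.inr t) :=
  Fintype.sum_sum_type f

theorem stmt_15 (K T : ℕ) (hK2 : 2 ≤ K) (hKeven : 2 ∣ K) :
    -- any feasible schedule processing each need-`K` job in its arrival slot has
    -- total flow time at least (K/2)·T
    (∀ d : sfJob K T → ℕ,
        (∀ j, sfArr K T j ≤ d j) →
        (∀ t : ℕ, ∑ j ∈ Finset.univ.filter (fun j => d j = t), sfNeed K T j ≤ K) →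
        (∀ t : Fin T, d (Sum.inr t) = (t : ℕ) + 1) →
        K / 2 * T ≤ ∑ j, (d j - sfArr K T j + 1)) ∧
    -- there is a feasible schedule with total flow time at most K/2 + 2T + 1
    (∃ d : sfJob K T → ℕ,
        (∀ j, sfArr K T j ≤ d j) ∧
        (∀ t : ℕ, ∑ j ∈ Finset.univ.filter (fun j => d j = t), sfNeed K T j ≤ K) ∧
        ∑ j, (d j - sfArr K T j + 1) ≤ K / 2 + 2 * T + 1) ∧
    -- hence for T ≥ K² the ratio of the two flow times is at least K/5
    (K ^ 2 ≤ T → K * (K / 2 + 2 * T + 1) ≤ 5 * (K / 2 * T)) := by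
  refine ⟨?_, ?_, ?_⟩
  · intro d hd hfeas hdr
    have hkey : ∀ i : Fin (K/2), T + 1 ≤ d (Sum.inl i) := by
      intro i
      by_contra h
      push_neg at h
      have h1 : 1 ≤ d (Sum.inl i) := hd (Sum.inl i)
      set s := d (Sum.inl i) with hs
      have hsT : s - 1 < T := by omega
      set j : Fin T := ⟨s - 1, hsT⟩ with hj
      have hdj : d (Sum.inr j) = s := by
        rw [hdr j]; simp [hj]; omega
      have hsub : ({(Sum.inl i : sfJob K T), (Sum.inr j : sfJob K T)} : Finset (sfJob K T)) ⊆
          Finset.univ.filter (fun x => d x = s) := by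
        intro x hx
        rcases (Finset.mem_insert.mp hx).imp_right Finset.mem_singleton.mp with rfl | rfl
        · exact Finset.mem_filter.mpr ⟨Finset.mem_univ _, hs.symm⟩
        · exact Finset.mem_filter.mpr ⟨Finset.mem_univ _, hdj⟩
      have hsum : ∑ x ∈ ({(Sum.inl i : sfJob K T), (Sum.inr j : sfJob K T)} : Finset (sfJob K T)), sfNeed K T x
          = 1 + K := by
        exact (Finset.sum_pair (f := sfNeed K T) (a := Sum.inl i) (b := Sum.inr j) Sum.inl_ne_inr).trans rfl
      have := Finset.sum_le_sum_of_subset (f := sfNeed K T) hsub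
      rw [hsum] at this
      have := le_trans this (hfeas s)
      omega
    rw [sfJob_sum]
    have h1 : K / 2 * T ≤ ∑ i : Fin (K/2), (d (Sum.inl i) - sfArr K T (Sum.inl i) + 1) := by
      calc K / 2 * T = ∑ _i : Fin (K/2), T := by simp [mul_comm]
        _ ≤ _ := by
          apply Finset.sum_le_sum
          intro i _
          have := hkey i
          simp only [sfArr, Sum.elim_inl]
          omega
    omega
  · refine ⟨Sum.elim (fun _ => 1) (fun t => (t : ℕ) + 2), ?_, ?_, ?_⟩
    · rintro (i | t) <;> simp [sfArr]
    · intro t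
      rw [Finset.sum_filter, sfJob_sum]
      simp only [Sum.elim_inl, Sum.elim_inr, sfNeed]
      change ((∑ _i : Fin (K/2), if 1 = t then 1 else 0) + ∑ s : Fin T, if (s : ℕ) + 2 = t then K else 0) ≤ K
      rcases Nat.lt_or_ge t 2 with h2 | h2
      · have hz : ∀ s : Fin T, ¬ ((s : ℕ) + 2 = t) := by intro s; omega
        have h2' : ∑ s : Fin T, (if (s : ℕ) + 2 = t then K else 0) = 0 := by
          simp [hz]
        rw [h2']
        have h1' : ∑ _i : Fin (K/2), (if 1 = t then 1 else 0) ≤ K / 2 := by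
          by_cases h : 1 = t
          · subst h; simp
          · simp [h]
        omega
      · have h1z : ¬ (1 = t) := by omega
        have h1' : ∑ _i : Fin (K/2), (if 1 = t then 1 else 0) = 0 := by simp [h1z]
        rw [h1']
        by_cases hT : t - 2 < T
        · have heq : ∀ s : Fin T, ((s : ℕ) + 2 = t) ↔ s = ⟨t - 2, hT⟩ := by
            intro s
            constructor
            · intro h; exact Fin.ext (by simp; omega)
            · rintro rfl; simp; omega
          simp only [heq]
          rw [Finset.sum_ite_eq' Finset.univ]
          simp
        · have hz : ∀ s : Fin T, ¬ ((s : ℕ) + 2 = t) := by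
            intro s; have := s.isLt; omega
          simp [hz]
    · rw [sfJob_sum]
      simp [sfArr]
      omega
  · intro hT
    obtain ⟨m, rfl⟩ := hKeven
    have hm : 1 ≤ m := by omega
    have hdiv : 2 * m / 2 = m := by omega
    rw [hdiv]
    nlinarith [hT, sq_nonneg m, Nat.mul_le_mul_left m hT]
end

section
/- Let (ΔW_{≤a}) be partial sums of a sequence ΔW_a of reals satisfying ΔW_{≤a} ≤ (K−1)·2^{a+1} for all a, and let W^OPT_a ≥ 0 with n^OPT_a ≥ W^OPT_a/2^{a+1}, and −ΔW_{≤a₁−1} ≤ W^OPT_{≤a₁−1} where W^OPT_{≤a₁−1} ≤ 2^{a₁}·2·n^OPT_{≤a₁−1}. Then for any 0 ≤ a₁ ≤ a₂: Σ_{a=a₁}^{a₂} (ΔW_a + W^OPT_a)/2^a ≤ (a₂ − a₁ + 2)·(K−1) + 2·n^OPT_{≤a₂}, where n^OPT_{≤a₂} = Σ_{a ≤ a₂} n^OPT_a. -/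
private lemma Icc_insert_top (a b : ℤ) (h : a ≤ b + 1) :
    Finset.Icc a (b + 1) = insert (b + 1) (Finset.Icc a b) := by
  ext x; simp only [Finset.mem_insert, Finset.mem_Icc]; omega

private lemma sum_Icc_top {M : Type*} [AddCommMonoid M] (a b : ℤ) (h : a ≤ b + 1)
    (f : ℤ → M) :
    ∑ k ∈ Finset.Icc a (b + 1), f k = (∑ k ∈ Finset.Icc a b, f k) + f (b + 1) := by
  rw [Icc_insert_top a b h, Finset.sum_insert (by simp), add_comm]

theorem stmt_19 (K : ℝ) (a₁ a₂ : ℤ) (ha₁ : 0 ≤ a₁) (ha : a₁ ≤ a₂)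
    (dW Wopt nopt dWle Woptle noptle : ℤ → ℝ)
    (hdWle : ∀ a : ℤ, dWle a = dWle (a - 1) + dW a)
    (hWoptle : ∀ a : ℤ, Woptle a = Woptle (a - 1) + Wopt a)
    (hnoptle : ∀ a : ℤ, noptle a = noptle (a - 1) + nopt a)
    (hbound : ∀ a : ℤ, dWle a ≤ (K - 1) * 2 ^ (a + 1))
    (hWpos : ∀ a : ℤ, 0 ≤ Wopt a)
    (hn : ∀ a : ℤ, Wopt a / 2 ^ (a + 1) ≤ nopt a)
    (hnpos : ∀ a : ℤ, 0 ≤ nopt a)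
    (hneg : -dWle (a₁ - 1) ≤ Woptle (a₁ - 1))
    (hWle : Woptle (a₁ - 1) ≤ 2 ^ a₁ * (2 * noptle (a₁ - 1))) :
    ∑ a ∈ Finset.Icc a₁ a₂, (dW a + Wopt a) / 2 ^ a ≤
      ((a₂ - a₁ + 2 : ℤ) : ℝ) * (K - 1) + 2 * noptle a₂ := by
  have hpow : ∀ a : ℤ, (0:ℝ) < 2 ^ a := fun a => zpow_pos (by norm_num) a
  -- key summation-by-parts bound
  have key : ∀ n : ℤ, a₁ ≤ n →
      ∑ a ∈ Finset.Icc a₁ n, dW a / 2 ^ a ≤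
        ((n - a₁ : ℤ) : ℝ) * (K - 1) + dWle n / 2 ^ n - dWle (a₁ - 1) / 2 ^ a₁ := by
    refine Int.le_induction ?_ (fun n hn' ih => ?_)
    · rw [Finset.Icc_self, Finset.sum_singleton]
      have := hdWle a₁
      push_cast
      rw [this]
      have : (dWle (a₁ - 1) + dW a₁) / 2 ^ a₁ = dWle (a₁ - 1) / 2 ^ a₁ + dW a₁ / 2 ^ a₁ :=
        add_div _ _ _
      rw [this]; push_cast; ring_nf; rfl
    · rw [sum_Icc_top a₁ n (by omega)]
      have hdw : dW (n + 1) = dWle (n + 1) - dWle n := by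
        have := hdWle (n + 1); simp only [add_sub_cancel_right] at this; linarith
      have hstep : dWle n / 2 ^ (n + 1) ≤ K - 1 := by
        rw [div_le_iff₀ (hpow (n + 1))]
        exact hbound n
      have hhalf : (2:ℝ) ^ (n + 1) = 2 ^ n * 2 := by
        rw [zpow_add_one₀ (by norm_num : (2:ℝ) ≠ 0)]
      have e1 : dWle n / 2 ^ n = dWle n / 2 ^ (n + 1) + dWle n / 2 ^ (n + 1) := by
        rw [hhalf]; field_simp; ring
      have : dW (n + 1) / 2 ^ (n + 1) = dWle (n + 1) / 2 ^ (n + 1) - dWle n / 2 ^ (n + 1) := by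
        rw [hdw, sub_div]
      rw [this]
      push_cast
      push_cast at ih
      nlinarith [ih, hstep]
  have key2 := key a₂ ha
  -- the Wopt part
  have keyW : ∀ n : ℤ, a₁ ≤ n →
      ∑ a ∈ Finset.Icc a₁ n, Wopt a / 2 ^ a ≤ 2 * (noptle n - noptle (a₁ - 1)) := by
    refine Int.le_induction ?_ (fun n hn' ih => ?_)
    · rw [Finset.Icc_self, Finset.sum_singleton]
      have h1 := hn a₁
      have h2 := hnoptle a₁
      have hhalf : (2:ℝ) ^ (a₁ + 1) = 2 ^ a₁ * 2 := by
        rw [zpow_add_one₀ (by norm_num : (2:ℝ) ≠ 0)]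
      have : Wopt a₁ / 2 ^ a₁ = 2 * (Wopt a₁ / 2 ^ (a₁ + 1)) := by
        rw [hhalf]; field_simp
      rw [this, h2]
      linarith
    · rw [sum_Icc_top a₁ n (by omega)]
      have h1 := hn (n + 1)
      have h2 := hnoptle (n + 1)
      simp only [add_sub_cancel_right] at h2
      have hhalf : (2:ℝ) ^ (n + 1 + 1) = 2 ^ (n + 1) * 2 := by
        rw [zpow_add_one₀ (by norm_num : (2:ℝ) ≠ 0)]
      have : Wopt (n + 1) / 2 ^ (n + 1) = 2 * (Wopt (n + 1) / 2 ^ (n + 1 + 1)) := by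
        rw [hhalf]; field_simp
      rw [this, h2]
      linarith
  have keyW2 := keyW a₂ ha
  have hsplit : ∑ a ∈ Finset.Icc a₁ a₂, (dW a + Wopt a) / 2 ^ a =
      (∑ a ∈ Finset.Icc a₁ a₂, dW a / 2 ^ a) + ∑ a ∈ Finset.Icc a₁ a₂, Wopt a / 2 ^ a := by
    rw [← Finset.sum_add_distrib]
    exact Finset.sum_congr rfl fun a _ => add_div _ _ _
  have htop : dWle a₂ / 2 ^ a₂ ≤ 2 * (K - 1) := by
    have h := hbound a₂
    rw [div_le_iff₀ (hpow a₂)]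
    have : (2:ℝ) ^ (a₂ + 1) = 2 ^ a₂ * 2 := by
      rw [zpow_add_one₀ (by norm_num : (2:ℝ) ≠ 0)]
    rw [this] at h
    linarith
  have hbot : -(dWle (a₁ - 1) / 2 ^ a₁) ≤ 2 * noptle (a₁ - 1) := by
    rw [← neg_div]
    rw [div_le_iff₀ (hpow a₁)]
    calc -dWle (a₁ - 1) ≤ Woptle (a₁ - 1) := hneg
      _ ≤ 2 ^ a₁ * (2 * noptle (a₁ - 1)) := hWle
      _ = 2 * noptle (a₁ - 1) * 2 ^ a₁ := by ring
  rw [hsplit]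
  push_cast
  push_cast at key2
  linarith
end
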